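/- arXiv:2206.13331 — 2 statements merged into one kernel-verified Lean document; each statement's English description precedes it below -/
import Mathlib

section
/- Define F(s) = ζ(2m+1+s)^k ζ(1-s)^k / cos(πs/2) · (ρ/(2π)^k)^{-s} for a nonzero integer m, natural number k ≥ 1, and ρ > 0. Then for each integer j with 0 ≤ j ≤ m+1 (m ≥ 1), the residue of F at s = 1-2j equals (-1)^{km+k+j+1} 2^{2km+1} π^{2km+2k-1} B_{2m-2j+2}^k B_{2j}^k /((2m-2j+2)!^k (2j)!^k) · (ρ/(2π)^k)^{2j-1}. -/
open Real Filter Topology Nat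

private lemma cos_nat_pi (n : ℕ) : Complex.cos (n * Real.pi) = (-1) ^ n := by
  induction n with
  | zero => simp
  | succ n ih => push_cast; rw [add_mul, one_mul, Complex.cos_add_pi, ih]; ring

private lemma zeta_even (n : ℕ) :
    riemannZeta (2 * (n : ℂ)) = (-1) ^ (n + 1) * (2 * (Real.pi : ℂ)) ^ (2 * n) *
      (bernoulli (2 * n) : ℂ) / (2 * (Nat.factorial (2 * n) : ℂ)) := by
  rcases Nat.eq_zero_or_pos n with h | h
  · subst h; simp [riemannZeta_zero]
  · rw [riemannZeta_two_mul_nat h.ne', mul_pow]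
    rw [show (2 : ℂ) ^ (2 * n) = 2 ^ (2 * n - 1) * 2 from by
      rw [← pow_succ]; congr 1; omega]
    ring

private lemma neg_one_pow_congr' {p q : ℕ} (h : p % 2 = q % 2) : ((-1 : ℂ)) ^ p = (-1) ^ q := by
  rw [← Nat.div_add_mod p 2, ← Nat.div_add_mod q 2, pow_add, pow_add, pow_mul, pow_mul]
  norm_num [h]

private lemma four_pow (k : ℕ) : (4 : ℂ) ^ k = 2 ^ (k * 2) := by
  rw [show (4:ℂ) = 2^2 from by norm_num, ← pow_mul, mul_comm]

private lemma key_alg (m a j k : ℕ) (hk : 1 ≤ k) (haj : a + j = m + 1)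
    (B1 B2 f1 f2 : ℂ) (hf1 : f1 ≠ 0) (hf2 : f2 ≠ 0) :
    (-(-1:ℂ)^j * ((Real.pi:ℂ)/2))⁻¹ *
      (((-1) ^ (a+1) * (2*(Real.pi:ℂ))^(2*a) * B1 / (2*f1))^k *
       ((-1) ^ (j+1) * (2*(Real.pi:ℂ))^(2*j) * B2 / (2*f2))^k)
    = (-1)^(k*m+k+j+1) * 2^(2*k*m+1) * (Real.pi:ℂ)^(2*k*m+2*k-1) * B1^k * B2^k / (f1^k * f2^k) := by
  have hπ : (Real.pi : ℂ) ≠ 0 := Complex.ofReal_ne_zero.mpr Real.pi_ne_zero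
  obtain ⟨k, rfl⟩ : ∃ k', k = k' + 1 := ⟨k - 1, by omega⟩
  rw [show 2 * (k+1) * m + 2 * (k+1) - 1 = 2*k*m + 2*m + 2*k + 1 from by ring_nf; omega]
  rcases j with _ | j
  · obtain rfl : a = m + 1 := by omega
    field_simp
    ring_nf
    have hA : f1 * f1 ^ k * f1⁻¹ * f1⁻¹ ^ k * f2 * f2 ^ k * f2⁻¹ * f2⁻¹ ^ k * ((-1 / 2 : ℂ) ^ k * 2 ^ k)
        = (-1) ^ k := by
      rw [show f1 * f1 ^ k * f1⁻¹ * f1⁻¹ ^ k * f2 * f2 ^ k * f2⁻¹ * f2⁻¹ ^ k * ((-1 / 2 : ℂ) ^ k * 2 ^ k)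
        = (f1 * f1⁻¹) ^ (k + 1) * (f2 * f2⁻¹) ^ (k + 1) * ((-1 / 2 : ℂ) ^ k * 2 ^ k) from by ring,
        mul_inv_cancel₀ hf1, mul_inv_cancel₀ hf2]
      simp only [one_pow, one_mul]
      rw [← mul_pow]
      norm_num
    linear_combination ((Real.pi:ℂ)^2*(Real.pi:ℂ)^(m*2)*(Real.pi:ℂ)^(m*k*2)*(Real.pi:ℂ)^(k*2)*B1*B1^k*B2*B2^k*(-1)^m*(-1)^(m*k)*2^(m*2)*2^(m*k*2)*2) * hA
  · obtain rfl : m = a + j := by omega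
    field_simp
    ring_nf
    have hA : f1 * f1 ^ k * f1⁻¹ * f1⁻¹ ^ k * f2 * f2 ^ k * f2⁻¹ * f2⁻¹ ^ k * ((-1 / 2 : ℂ) ^ k * 2 ^ k)
        = (-1) ^ k := by
      rw [show f1 * f1 ^ k * f1⁻¹ * f1⁻¹ ^ k * f2 * f2 ^ k * f2⁻¹ * f2⁻¹ ^ k * ((-1 / 2 : ℂ) ^ k * 2 ^ k)
        = (f1 * f1⁻¹) ^ (k + 1) * (f2 * f2⁻¹) ^ (k + 1) * ((-1 / 2 : ℂ) ^ k * 2 ^ k) from by ring,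
        mul_inv_cancel₀ hf1, mul_inv_cancel₀ hf2]
      simp only [one_pow, one_mul]
      rw [← mul_pow]
      norm_num
    rw [neg_one_pow_congr' (show j*3 % 2 = j % 2 from by omega)]
    linear_combination ((Real.pi:ℂ)^2*(Real.pi:ℂ)^(a*2)*(Real.pi:ℂ)^(a*k*2)*(Real.pi:ℂ)^(k*2)*(Real.pi:ℂ)^(k*j*2)*(Real.pi:ℂ)^(j*2)*B1*B1^k*B2*B2^k*(-1)^a*(-1)^(a*k)*(-1)^(k*j)*(-1)^j*2^(a*2)*2^(a*k*2)*2^(k*j*2)*2^(j*2)*2) * hA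

theorem residue_F_at_odd_points (m k : ℕ) (hm : 1 ≤ m) (hk : 1 ≤ k) (ρ : ℝ) (hρ : 0 < ρ)
    (j : ℕ) (hj : j ≤ m + 1) :
    Tendsto
      (fun s : ℂ =>
        (s - (1 - 2 * j)) *
          (riemannZeta (2 * m + 1 + s) ^ k * riemannZeta (1 - s) ^ k /
              Complex.cos (Real.pi * s / 2) *
            ((ρ : ℂ) / (2 * (Real.pi : ℂ)) ^ k) ^ (-s)))
      (𝓝[≠] (1 - 2 * j))
      (𝓝 ((-1) ^ (k * m + k + j + 1) * 2 ^ (2 * k * m + 1) *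
          (Real.pi : ℂ) ^ (2 * k * m + 2 * k - 1) *
          (bernoulli (2 * m + 2 - 2 * j) : ℂ) ^ k * (bernoulli (2 * j) : ℂ) ^ k /
            ((Nat.factorial (2 * m + 2 - 2 * j) : ℂ) ^ k * (Nat.factorial (2 * j) : ℂ) ^ k) *
          ((ρ : ℂ) / (2 * (Real.pi : ℂ)) ^ k) ^ (2 * (j : ℤ) - 1))) := by
  have hπ : (Real.pi : ℂ) ≠ 0 := Complex.ofReal_ne_zero.mpr Real.pi_ne_zero
  set s0 : ℂ := 1 - 2 * j with hs0
  set c : ℂ := (ρ : ℂ) / (2 * (Real.pi : ℂ)) ^ k with hc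
  have hcne : c ≠ 0 := by
    apply div_ne_zero (Complex.ofReal_ne_zero.mpr hρ.ne')
    exact pow_ne_zero _ (by simp [hπ])
  set a : ℕ := m + 1 - j with ha
  have haj : a + j = m + 1 := by omega
  have hca : (a : ℂ) + j = (m : ℂ) + 1 := by exact_mod_cast congrArg (Nat.cast (R := ℂ)) haj
  have harg : (Real.pi : ℂ) * s0 / 2 = Real.pi / 2 - j * Real.pi := by rw [hs0]; ring
  have hcos0 : Complex.cos (Real.pi * s0 / 2) = 0 := by
    rw [harg, Complex.cos_pi_div_two_sub]
    exact_mod_cast Complex.sin_int_mul_pi j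
  have hsin0 : Complex.sin (Real.pi * s0 / 2) = (-1) ^ j := by
    rw [harg, Complex.sin_pi_div_two_sub, cos_nat_pi]
  have hd : HasDerivAt (fun s : ℂ => Complex.cos (Real.pi * s / 2))
      (-(-1) ^ j * (Real.pi / 2)) s0 := by
    have h1 : HasDerivAt (fun s : ℂ => (Real.pi : ℂ) * s / 2) ((Real.pi : ℂ) / 2) s0 := by
      simpa using (((hasDerivAt_id s0).const_mul (Real.pi : ℂ)).div_const 2)
    have := (Complex.hasDerivAt_cos ((Real.pi : ℂ) * s0 / 2)).comp s0 h1
    simpa [hsin0, neg_mul, Function.comp_def] using this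
  have hdne : (-(-1 : ℂ) ^ j * ((Real.pi : ℂ) / 2)) ≠ 0 := by
    apply mul_ne_zero
    · simpa using (pow_ne_zero j (by norm_num : (-1 : ℂ) ≠ 0))
    · exact div_ne_zero hπ two_ne_zero
  have h1 : Tendsto (fun s : ℂ => (s - s0) / Complex.cos (Real.pi * s / 2)) (𝓝[≠] s0)
      (𝓝 (-(-1 : ℂ) ^ j * ((Real.pi : ℂ) / 2))⁻¹) := by
    have := (hasDerivAt_iff_tendsto_slope.mp hd).inv₀ hdne
    refine this.congr' ?_
    filter_upwards [self_mem_nhdsWithin] with s hs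
    rw [slope_def_field, hcos0, sub_zero, inv_div]
  -- continuity of the remaining factor
  have he1 : 2 * (m : ℂ) + 1 + s0 = 2 * (a : ℂ) := by
    rw [hs0]; push_cast; linear_combination -2 * hca
  have he2 : 1 - s0 = 2 * (j : ℂ) := by rw [hs0]; push_cast; ring
  have hne1 : 2 * (m : ℂ) + 1 + s0 ≠ 1 := by
    rw [he1]
    have : ((2 * a : ℕ) : ℂ) ≠ 1 := by rw [Ne, Nat.cast_eq_one]; omega
    push_cast at this; exact this
  have hne2 : 1 - s0 ≠ 1 := by
    rw [he2]
    have : ((2 * j : ℕ) : ℂ) ≠ 1 := by rw [Ne, Nat.cast_eq_one]; omega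
    push_cast at this; exact this
  have hG : ContinuousAt (fun s : ℂ =>
      riemannZeta (2 * m + 1 + s) ^ k * riemannZeta (1 - s) ^ k * c ^ (-s)) s0 := by
    have hc1 : ContinuousAt (fun s : ℂ => riemannZeta (2 * m + 1 + s)) s0 :=
      (differentiableAt_riemannZeta hne1).continuousAt.comp
        ((continuous_const.add continuous_id).continuousAt)
    have hc2 : ContinuousAt (fun s : ℂ => riemannZeta (1 - s)) s0 :=
      (differentiableAt_riemannZeta hne2).continuousAt.comp
        ((continuous_const.sub continuous_id).continuousAt)
    have hc3 : ContinuousAt (fun s : ℂ => c ^ (-s)) s0 :=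
      (continuousAt_const_cpow hcne).comp continuous_neg.continuousAt
    exact ((hc1.pow k).mul (hc2.pow k)).mul hc3
  have htot := h1.mul (hG.tendsto.mono_left nhdsWithin_le_nhds)
  have hval : (-(-1 : ℂ) ^ j * ((Real.pi : ℂ) / 2))⁻¹ *
      (riemannZeta (2 * m + 1 + s0) ^ k * riemannZeta (1 - s0) ^ k * c ^ (-s0)) =
      (-1) ^ (k * m + k + j + 1) * 2 ^ (2 * k * m + 1) *
        (Real.pi : ℂ) ^ (2 * k * m + 2 * k - 1) *
        (bernoulli (2 * m + 2 - 2 * j) : ℂ) ^ k * (bernoulli (2 * j) : ℂ) ^ k /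
          ((Nat.factorial (2 * m + 2 - 2 * j) : ℂ) ^ k * (Nat.factorial (2 * j) : ℂ) ^ k) *
        c ^ (2 * (j : ℤ) - 1) := by
    have hns : -s0 = ((2 * (j : ℤ) - 1 : ℤ) : ℂ) := by rw [hs0]; push_cast; ring
    rw [he1, he2, hns, Complex.cpow_intCast, zeta_even a, zeta_even j,
      show 2 * m + 2 - 2 * j = 2 * a from by omega]
    have hk2 := key_alg m a j k hk haj (bernoulli (2 * a) : ℂ) (bernoulli (2 * j) : ℂ)
      ((Nat.factorial (2 * a) : ℂ)) ((Nat.factorial (2 * j) : ℂ))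
      (Nat.cast_ne_zero.mpr (Nat.factorial_ne_zero _))
      (Nat.cast_ne_zero.mpr (Nat.factorial_ne_zero _))
    calc (-(-1 : ℂ) ^ j * ((Real.pi : ℂ) / 2))⁻¹ *
        (((-1) ^ (a+1) * (2*(Real.pi:ℂ))^(2*a) * (bernoulli (2*a) : ℂ) /
            (2 * (Nat.factorial (2*a) : ℂ)))^k *
         ((-1) ^ (j+1) * (2*(Real.pi:ℂ))^(2*j) * (bernoulli (2*j) : ℂ) /
            (2 * (Nat.factorial (2*j) : ℂ)))^k * c ^ (2 * (j : ℤ) - 1))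
        = ((-(-1 : ℂ) ^ j * ((Real.pi : ℂ) / 2))⁻¹ *
            (((-1) ^ (a+1) * (2*(Real.pi:ℂ))^(2*a) * (bernoulli (2*a) : ℂ) /
              (2 * (Nat.factorial (2*a) : ℂ)))^k *
             ((-1) ^ (j+1) * (2*(Real.pi:ℂ))^(2*j) * (bernoulli (2*j) : ℂ) /
              (2 * (Nat.factorial (2*j) : ℂ)))^k)) * c ^ (2 * (j : ℤ) - 1) := by ring
      _ = _ := by rw [hk2]
  have htot' : Tendsto (fun s : ℂ => (s - s0) / Complex.cos (Real.pi * s / 2) *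
      (riemannZeta (2 * m + 1 + s) ^ k * riemannZeta (1 - s) ^ k * c ^ (-s)))
      (𝓝[≠] s0)
      (𝓝 ((-1) ^ (k * m + k + j + 1) * 2 ^ (2 * k * m + 1) *
          (Real.pi : ℂ) ^ (2 * k * m + 2 * k - 1) *
          (bernoulli (2 * m + 2 - 2 * j) : ℂ) ^ k * (bernoulli (2 * j) : ℂ) ^ k /
            ((Nat.factorial (2 * m + 2 - 2 * j) : ℂ) ^ k * (Nat.factorial (2 * j) : ℂ) ^ k) *
          c ^ (2 * (j : ℤ) - 1))) := by
    rw [← hval]; exact htot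
  exact htot'.congr fun s => by ring
end

section
/- For every odd positive integer m, the rational number Σ_{j=0}^{m+1} (-1)^{j+1} B_{2j} B_{2m+2-2j} /((2j)!(2m+2-2j)!) is nonzero. -/
open Nat

open Real Finset in
private noncomputable def xiz (k : ℕ) : ℝ := ∑' n : ℕ, 1 / (n : ℝ) ^ (2 * k)

open Real Finset in
private lemma hasSum_xiz {k : ℕ} (hk : k ≠ 0) :
    HasSum (fun n : ℕ => 1 / (n : ℝ) ^ (2 * k)) (xiz k) :=
  (hasSum_zeta_nat hk).summable.hasSum

open Real Finset in
private lemma one_le_xiz {k : ℕ} (hk : k ≠ 0) : 1 ≤ xiz k := by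
  have h := le_hasSum (hasSum_xiz hk) 1 (fun j _ => by positivity)
  simpa using h

open Real Finset in
private lemma xiz_eq {k : ℕ} (hk : k ≠ 0) :
    xiz k = (-1 : ℝ) ^ (k + 1) * (2 : ℝ) ^ (2 * k - 1) * π ^ (2 * k) *
      (bernoulli (2 * k) : ℝ) / (2 * k)! :=
  ((hasSum_zeta_nat hk).unique (hasSum_xiz hk)).symm

open Real Finset in
private lemma bern_eq {k : ℕ} (hk : k ≠ 0) :
    ((bernoulli (2 * k) : ℚ) : ℝ) =
      (-1 : ℝ) ^ (k + 1) * 2 * (2 * k)! * xiz k / (2 * π) ^ (2 * k) := by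
  have h := xiz_eq hk
  have hfac : ((2 * k)! : ℝ) ≠ 0 := by positivity
  have hsign : ((-1 : ℝ) ^ (k + 1)) * ((-1 : ℝ) ^ (k + 1)) = 1 := by
    rw [← pow_add]
    exact Even.neg_one_pow ⟨k + 1, by ring⟩
  have h2 : (2 : ℝ) ^ (2 * k - 1) * 2 = 2 ^ (2 * k) := by
    rw [← pow_succ]
    congr 1
    omega
  have hpow : ((2 : ℝ) * π) ^ (2 * k) = 2 ^ (2 * k) * π ^ (2 * k) := mul_pow _ _ _
  have hπ : (π : ℝ) ^ (2 * k) ≠ 0 := pow_ne_zero _ Real.pi_ne_zero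
  rw [h, hpow]
  field_simp
  linear_combination (-(2 * 2^(2*k-1) * ((bernoulli (2*k) : ℚ) : ℝ))) * hsign + (-(((bernoulli (2*k) : ℚ) : ℝ))) * h2

open Real Finset in
private lemma geom_aux (N : ℕ) : ∑ i ∈ range N, (1/4 : ℝ) ^ (i + 1) ≤ 1/3 := by
  have h : ∀ M : ℕ, ∑ i ∈ range M, (1/4 : ℝ) ^ (i + 1) = (1 - (1/4 : ℝ) ^ M) / 3 := by
    intro M
    induction M with
    | zero => simp
    | succ M ih =>
      rw [Finset.sum_range_succ, ih, pow_succ]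
      ring
  rw [h]
  have : (0:ℝ) ≤ (1/4 : ℝ) ^ N := by positivity
  linarith

open Real Finset in
private lemma xiz_le {k : ℕ} (hk : k ≠ 0) : xiz k ≤ 1 + (1/4 : ℝ) ^ (k - 1) := by
  have hsum := hasSum_xiz hk
  have hsummable := hsum.summable
  have hsplit := Summable.sum_add_tsum_nat_add (f := fun n : ℕ => 1 / (n : ℝ) ^ (2 * k)) 2 hsummable
  have hzero : (1 : ℝ) / (0 : ℝ) ^ (2 * k) = 0 := by
    rw [zero_pow (by omega), div_zero]
  have hfront : ∑ i ∈ range 2, 1 / (i : ℝ) ^ (2 * k) = 1 := by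
    rw [Finset.sum_range_succ, Finset.sum_range_one]
    push_cast
    rw [hzero, one_pow]
    norm_num
  -- the tail of zeta(2)
  have hz2 := hasSum_zeta_two
  have hz2split := Summable.sum_add_tsum_nat_add (f := fun n : ℕ => (1 : ℝ) / (n : ℝ) ^ 2) 2 hz2.summable
  have hfront2 : ∑ i ∈ range 2, (1 : ℝ) / (i : ℝ) ^ 2 = 1 := by
    rw [Finset.sum_range_succ, Finset.sum_range_one]
    norm_num
  have hz2val : ∑' i : ℕ, (1 : ℝ) / ((i : ℝ) + 2) ^ 2 = π ^ 2 / 6 - 1 := by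
    have ht := hz2.tsum_eq
    rw [ht, hfront2] at hz2split
    have h' : ∑' (i : ℕ), (1:ℝ) / ((i + 2 : ℕ) : ℝ) ^ 2 = π ^ 2 / 6 - 1 := by linarith
    rw [← h']
    congr 1 with i
    push_cast
    ring
  have htail2_le : ∑' i : ℕ, (1 : ℝ) / ((i : ℝ) + 2) ^ 2 ≤ 1 := by
    rw [hz2val]
    nlinarith [Real.pi_lt_d2, Real.pi_gt_three]
  have hsummable_tail : Summable (fun i : ℕ => (1 : ℝ) / ((i : ℝ) + 2) ^ (2 * k)) := by
    have h' := (summable_nat_add_iff (f := fun n : ℕ => 1 / (n : ℝ) ^ (2 * k)) 2).2 hsummable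
    exact h'.congr (fun i => by push_cast; ring)
  have hsummable_tail2 : Summable (fun i : ℕ => (1/4 : ℝ) ^ (k - 1) * ((1 : ℝ) / ((i : ℝ) + 2) ^ 2)) := by
    apply Summable.mul_left
    have h' := (summable_nat_add_iff (f := fun n : ℕ => (1 : ℝ) / (n : ℝ) ^ 2) 2).2 hz2.summable
    exact h'.congr (fun i => by push_cast; ring)
  have hterm : ∀ i : ℕ, (1 : ℝ) / ((i : ℝ) + 2) ^ (2 * k) ≤
      (1/4 : ℝ) ^ (k - 1) * ((1 : ℝ) / ((i : ℝ) + 2) ^ 2) := by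
    intro i
    set x : ℝ := (i : ℝ) + 2 with hx
    have hx2 : (2 : ℝ) ≤ x := by
      rw [hx]
      have : (0:ℝ) ≤ (i : ℝ) := Nat.cast_nonneg i
      linarith
    have hxpos : (0 : ℝ) < x := by linarith
    have hpowsplit : x ^ (2 * k) = x ^ 2 * (x ^ 2) ^ (k - 1) := by
      rw [← pow_mul, ← pow_add]
      congr 1
      omega
    have h4 : (4 : ℝ) ^ (k - 1) ≤ (x ^ 2) ^ (k - 1) := by
      apply pow_le_pow_left₀ (by norm_num)
      nlinarith
    rw [div_le_iff₀ (by positivity), hpowsplit]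
    have hfour : (1/4 : ℝ) ^ (k-1) * (4 : ℝ) ^ (k-1) = 1 := by
      rw [← mul_pow]; norm_num
    calc (1:ℝ) = (1/4 : ℝ) ^ (k-1) * (4:ℝ)^(k-1) := hfour.symm
      _ ≤ (1/4 : ℝ) ^ (k-1) * (x^2)^(k-1) := by
          apply mul_le_mul_of_nonneg_left h4 (by positivity)
      _ = (1/4 : ℝ) ^ (k - 1) * (1 / x ^ 2) * (x ^ 2 * (x ^ 2) ^ (k - 1)) := by
          field_simp
  have htail_le : ∑' i : ℕ, (1 : ℝ) / ((i : ℝ) + 2) ^ (2 * k) ≤ (1/4 : ℝ) ^ (k - 1) := by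
    calc ∑' i : ℕ, (1 : ℝ) / ((i : ℝ) + 2) ^ (2 * k)
        ≤ ∑' i : ℕ, (1/4 : ℝ) ^ (k - 1) * ((1 : ℝ) / ((i : ℝ) + 2) ^ 2) :=
          Summable.tsum_le_tsum hterm hsummable_tail hsummable_tail2
      _ = (1/4 : ℝ) ^ (k - 1) * ∑' i : ℕ, (1 : ℝ) / ((i : ℝ) + 2) ^ 2 := tsum_mul_left
      _ ≤ (1/4 : ℝ) ^ (k - 1) * 1 := by
          apply mul_le_mul_of_nonneg_left htail2_le (by positivity)
      _ = (1/4 : ℝ) ^ (k - 1) := mul_one _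
  have htail_eq : ∑' (i : ℕ), (1:ℝ) / ((i + 2 : ℕ) : ℝ) ^ (2 * k) =
      ∑' i : ℕ, (1 : ℝ) / ((i : ℝ) + 2) ^ (2 * k) := by
    congr 1 with i
    push_cast
    ring
  have hx : xiz k = 1 + ∑' i : ℕ, (1 : ℝ) / ((i : ℝ) + 2) ^ (2 * k) := by
    rw [xiz]
    rw [← hsplit, hfront, htail_eq]
  rw [hx]
  linarith [htail_le]

open Real Finset in
private lemma aux_field (s a b F1 F2 P1 P2 : ℝ) (hs : s * s = 1) (hF1 : F1 ≠ 0)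
    (hF2 : F2 ≠ 0) (hP1 : P1 ≠ 0) (hP2 : P2 ≠ 0) :
    s * (s * 2 * F1 * a / P1) * (s * 2 * F2 * b / P2) / (F1 * F2) =
      4 / (P1 * P2) * (s * (a * b)) := by
  field_simp
  linear_combination (4 * a * b * s) * hs

open Real Finset in
private lemma sign_eq {n j : ℕ} (hn : Even n) (hj : j ≤ n) :
    ((-1 : ℝ)) ^ (n - j + 1) = (-1) ^ (j + 1) := by
  have h1 : ((-1 : ℝ)) ^ (n - j + 1) * (-1) ^ (j + 1) = 1 := by
    rw [← pow_add, show n - j + 1 + (j + 1) = n + 2 by omega]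
    exact Even.neg_one_pow (by rcases hn with ⟨t, ht⟩; exact ⟨t + 1, by omega⟩)
  have h2 : ((-1 : ℝ)) ^ (j + 1) * (-1) ^ (j + 1) = 1 := by
    rw [← pow_add]
    exact Even.neg_one_pow ⟨j + 1, by ring⟩
  have hne : ((-1 : ℝ)) ^ (j + 1) ≠ 0 := by
    intro h
    rw [h, mul_zero] at h2
    norm_num at h2
  exact mul_right_cancel₀ hne (h1.trans h2.symm)

open Real Finset in
private lemma term_eq {n j : ℕ} (hn : Even n) (hj1 : 1 ≤ j) (hjn : j < n) :
    (-1 : ℝ) ^ (j + 1) * ((bernoulli (2 * j) : ℚ) : ℝ) * ((bernoulli (2 * (n - j)) : ℚ) : ℝ) /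
        (((2 * j)! : ℝ) * ((2 * (n - j))! : ℝ)) =
      4 / (2 * π) ^ (2 * n) * ((-1) ^ (j + 1) * (xiz j * xiz (n - j))) := by
  have hB1 := bern_eq (show j ≠ 0 by omega)
  have hB2 := bern_eq (show n - j ≠ 0 by omega)
  rw [hB1, hB2, sign_eq hn hjn.le]
  have hpow : ((2 : ℝ) * π) ^ (2 * j) * ((2 : ℝ) * π) ^ (2 * (n - j)) = ((2 : ℝ) * π) ^ (2 * n) := by
    rw [← pow_add]
    congr 1
    omega
  rw [← hpow]
  have hs : ((-1 : ℝ)) ^ (j + 1) * (-1) ^ (j + 1) = 1 := by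
    rw [← pow_add]
    exact Even.neg_one_pow ⟨j + 1, by ring⟩
  have h2pi : ((2 : ℝ) * π) ≠ 0 := by
    have := Real.pi_ne_zero
    positivity
  exact aux_field _ _ _ _ _ _ _ hs (by positivity) (by positivity)
    (pow_ne_zero _ h2pi) (pow_ne_zero _ h2pi)

open Real Finset in
private lemma eps_nonneg {n j : ℕ} (hj1 : 1 ≤ j) (hjn : j < n) :
    0 ≤ xiz j * xiz (n - j) - 1 := by
  have h1 := one_le_xiz (show j ≠ 0 by omega)
  have h2 := one_le_xiz (show n - j ≠ 0 by omega)
  nlinarith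

open Real Finset in
private lemma eps_le {n j : ℕ} (hj2 : 2 ≤ j) (hjn : j ≤ n - 2) (hn : 4 ≤ n) :
    xiz j * xiz (n - j) - 1 ≤ 5/4 * ((1/4 : ℝ) ^ (j - 1) + (1/4 : ℝ) ^ (n - j - 1)) := by
  have ha1 := one_le_xiz (show j ≠ 0 by omega)
  have ha2 := xiz_le (show j ≠ 0 by omega)
  have hb1 := one_le_xiz (show n - j ≠ 0 by omega)
  have hb2 := xiz_le (show n - j ≠ 0 by omega)
  have hp : (1/4 : ℝ) ^ (j - 1) ≤ 1/4 := by
    calc (1/4 : ℝ) ^ (j - 1) ≤ (1/4 : ℝ) ^ 1 :=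
          pow_le_pow_of_le_one (by norm_num) (by norm_num) (by omega)
      _ = 1/4 := pow_one _
  have hq : (1/4 : ℝ) ^ (n - j - 1) ≤ 1/4 := by
    calc (1/4 : ℝ) ^ (n - j - 1) ≤ (1/4 : ℝ) ^ 1 :=
          pow_le_pow_of_le_one (by norm_num) (by norm_num) (by omega)
      _ = 1/4 := pow_one _
  have hp0 : (0:ℝ) ≤ (1/4 : ℝ) ^ (j - 1) := by positivity
  have hq0 : (0:ℝ) ≤ (1/4 : ℝ) ^ (n - j - 1) := by positivity
  nlinarith [mul_le_mul ha2 hb2 (by linarith) (by positivity :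
    (0:ℝ) ≤ 1 + (1/4 : ℝ) ^ (j - 1))]

theorem bernoulli_sum_ne_zero (m : ℕ) (hm : 0 < m) (hodd : Odd m) :
    (∑ j ∈ Finset.range (m + 2),
        (-1 : ℚ) ^ (j + 1) * bernoulli (2 * j) * bernoulli (2 * m + 2 - 2 * j) /
          ((Nat.factorial (2 * j) : ℚ) * (Nat.factorial (2 * m + 2 - 2 * j) : ℚ))) ≠ 0 := by
  have hEven : Even (m + 1) := hodd.add_one
  set n := m + 1 with hn
  have hn2 : 2 ≤ n := by omega
  have hπ := Real.pi_ne_zero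
  set f : ℕ → ℝ := fun j => (-1 : ℝ) ^ (j + 1) * ((bernoulli (2 * j) : ℚ) : ℝ) *
      ((bernoulli (2 * n - 2 * j) : ℚ) : ℝ) /
      (((2 * j)! : ℝ) * ((2 * n - 2 * j)! : ℝ)) with hf
  have hcast : ((∑ j ∈ Finset.range (m + 2), (-1 : ℚ) ^ (j + 1) * bernoulli (2 * j) *
      bernoulli (2 * m + 2 - 2 * j) / ((Nat.factorial (2 * j) : ℚ) *
      (Nat.factorial (2 * m + 2 - 2 * j) : ℚ)) : ℚ) : ℝ) = ∑ j ∈ Finset.range (n + 1), f j := by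
    have h1 : 2 * m + 2 = 2 * n := by omega
    have h2 : m + 2 = n + 1 := by omega
    simp only [h1, h2, hf]
    push_cast
    apply Finset.sum_congr rfl
    intro x _
    rfl
  have hkey : (0:ℝ) < ∑ j ∈ Finset.range (n + 1), f j := by
    have hsplit : ∑ j ∈ Finset.range (n + 1), f j
        = f 0 + (∑ j ∈ Finset.Ico 1 n, f j) + f n := by
      rw [Finset.sum_range_succ]
      congr 1
      rw [Finset.range_eq_Ico, Finset.sum_eq_sum_Ico_succ_bot (by omega : 0 < n)]
    have hBneg : ((bernoulli (2 * n) : ℚ) : ℝ) < 0 := by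
      rw [bern_eq (show n ≠ 0 by omega),
        show ((-1:ℝ)) ^ (n + 1) = -1 from Odd.neg_one_pow hEven.add_one]
      have hx1 := one_le_xiz (show n ≠ 0 by omega)
      have hfp : (0:ℝ) < ((2 * n)! : ℝ) := by positivity
      apply div_neg_of_neg_of_pos _ (by positivity)
      nlinarith
    have hfp : (0:ℝ) < ((2 * n)! : ℝ) := by positivity
    have hf0 : f 0 = -((bernoulli (2 * n) : ℚ) : ℝ) / ((2 * n)! : ℝ) := by
      simp only [hf]
      norm_num
    have hfn : f n = -((bernoulli (2 * n) : ℚ) : ℝ) / ((2 * n)! : ℝ) := by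
      simp only [hf, Nat.sub_self,
        show ((-1:ℝ)) ^ (n + 1) = -1 from Odd.neg_one_pow hEven.add_one]
      norm_num
    have hE : (0:ℝ) < f 0 := by
      rw [hf0]
      exact div_pos (by linarith) hfp
    have hEn : (0:ℝ) < f n := by rw [hfn, ← hf0]; exact hE
    have hmid : ∑ j ∈ Finset.Ico 1 n, f j =
        4 / (2 * Real.pi) ^ (2 * n) *
          ∑ j ∈ Finset.Ico 1 n, ((-1:ℝ) ^ (j + 1) * (xiz j * xiz (n - j))) := by
      rw [Finset.mul_sum]
      apply Finset.sum_congr rfl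
      intro j hj
      rw [Finset.mem_Ico] at hj
      have h2n : 2 * n - 2 * j = 2 * (n - j) := by omega
      simp only [hf, h2n]
      exact term_eq hEven hj.1 hj.2
    set W := ∑ j ∈ Finset.Ico 1 n, ((-1:ℝ) ^ (j + 1) * (xiz j * xiz (n - j))) with hWdef
    have hWsplit : W = (∑ j ∈ Finset.Ico 1 n, (-1:ℝ) ^ (j + 1)) +
        ∑ j ∈ Finset.Ico 1 n, (-1:ℝ) ^ (j + 1) * (xiz j * xiz (n - j) - 1) := by
      rw [← Finset.sum_add_distrib]
      apply Finset.sum_congr rfl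
      intro j _
      ring
    have hsigns : ∑ j ∈ Finset.Ico 1 n, ((-1:ℝ)) ^ (j + 1) = 1 := by
      rw [Finset.sum_Ico_eq_sum_range]
      have he : ∀ i, ((-1:ℝ)) ^ (1 + i + 1) = (-1) ^ i := by
        intro i
        rw [show 1 + i + 1 = i + 2 by omega, pow_add]
        norm_num
      simp_rw [he]
      rw [neg_one_geom_sum, if_neg]
      rintro ⟨u, hu⟩
      rcases hEven with ⟨t, ht⟩
      omega
    set R := ∑ j ∈ Finset.Ico 1 n, (-1:ℝ) ^ (j + 1) * (xiz j * xiz (n - j) - 1) with hRdef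
    have hRge : -(5/6 : ℝ) ≤ R := by
      by_cases hn4 : n = 2
      · rw [hRdef, hn4]
        rw [show Finset.Ico 1 2 = {1} from rfl, Finset.sum_singleton]
        have h0 := eps_nonneg (le_refl 1) (show (1:ℕ) < 2 by norm_num)
        norm_num at h0 ⊢
        linarith
      · have hn4' : 4 ≤ n := by
          rcases hEven with ⟨t, ht⟩
          omega
        have hbot : R = (-1:ℝ) ^ (1 + 1) * (xiz 1 * xiz (n - 1) - 1) +
            ∑ j ∈ Finset.Ico 2 n, (-1:ℝ) ^ (j + 1) * (xiz j * xiz (n - j) - 1) := by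
          rw [hRdef, Finset.sum_eq_sum_Ico_succ_bot (show 1 < n by omega)]
        have htop : ∑ j ∈ Finset.Ico 2 n, (-1:ℝ) ^ (j + 1) * (xiz j * xiz (n - j) - 1) =
            (∑ j ∈ Finset.Ico 2 (n - 1), (-1:ℝ) ^ (j + 1) * (xiz j * xiz (n - j) - 1)) +
            (-1:ℝ) ^ ((n - 1) + 1) * (xiz (n - 1) * xiz (n - (n - 1)) - 1) := by
          conv_lhs => rw [show n = (n - 1) + 1 by omega]
          rw [Finset.sum_Ico_succ_top (by omega : 2 ≤ n - 1)]
          congr 1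
          all_goals first
            | (apply Finset.sum_congr rfl
               intro k _
               rw [show n - 1 + 1 - k = n - k by omega])
            | rw [show n - 1 + 1 - (n - 1) = n - (n - 1) by omega]
        have hg1 : (0:ℝ) ≤ (-1:ℝ) ^ (1 + 1) * (xiz 1 * xiz (n - 1) - 1) := by
          have h0 := eps_nonneg (le_refl 1) (show 1 < n by omega)
          have h1 : ((-1:ℝ)) ^ (1 + 1) = 1 := by norm_num
          rw [h1, one_mul]
          exact h0
        have hgn : (0:ℝ) ≤ (-1:ℝ) ^ ((n - 1) + 1) * (xiz (n - 1) * xiz (n - (n - 1)) - 1) := by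
          rw [show (n - 1) + 1 = n by omega, hEven.neg_one_pow, one_mul]
          exact eps_nonneg (by omega) (by omega)
        have hterm : ∀ j ∈ Finset.Ico 2 (n - 1),
            -(5/4 * ((1/4:ℝ) ^ (j - 1) + (1/4:ℝ) ^ (n - j - 1))) ≤
              (-1:ℝ) ^ (j + 1) * (xiz j * xiz (n - j) - 1) := by
          intro j hj
          rw [Finset.mem_Ico] at hj
          have he0 := eps_nonneg (show 1 ≤ j by omega) (show j < n by omega)
          have heb := eps_le hj.1 (by omega) hn4'
          rcases neg_one_pow_eq_or ℝ (j + 1) with h | h <;> rw [h] <;> nlinarith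
        have hsum := Finset.sum_le_sum hterm
        have hS1 : ∑ j ∈ Finset.Ico 2 (n - 1), (1/4:ℝ) ^ (j - 1) ≤ 1/3 := by
          rw [Finset.sum_Ico_eq_sum_range]
          calc ∑ i ∈ Finset.range (n - 1 - 2), (1/4:ℝ) ^ (2 + i - 1)
              = ∑ i ∈ Finset.range (n - 1 - 2), (1/4:ℝ) ^ (i + 1) := by
                apply Finset.sum_congr rfl
                intro i _
                congr 1
                omega
            _ ≤ 1/3 := geom_aux _
        have hS2 : ∑ j ∈ Finset.Ico 2 (n - 1), (1/4:ℝ) ^ (n - j - 1) ≤ 1/3 := by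
          rw [Finset.sum_Ico_eq_sum_range]
          calc ∑ i ∈ Finset.range (n - 1 - 2), (1/4:ℝ) ^ (n - (2 + i) - 1)
              = ∑ i ∈ Finset.range (n - 1 - 2), (1/4:ℝ) ^ ((n - 1 - 2) - 1 - i + 1) := by
                apply Finset.sum_congr rfl
                intro i hi
                rw [Finset.mem_range] at hi
                congr 1
                omega
            _ = ∑ i ∈ Finset.range (n - 1 - 2), (1/4:ℝ) ^ (i + 1) :=
                Finset.sum_range_reflect (fun t => (1/4:ℝ) ^ (t + 1)) _
            _ ≤ 1/3 := geom_aux _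
        have hlb : -(5/6 : ℝ) ≤
            ∑ j ∈ Finset.Ico 2 (n - 1), (-1:ℝ) ^ (j + 1) * (xiz j * xiz (n - j) - 1) := by
          have hsum2 : ∑ j ∈ Finset.Ico 2 (n - 1),
              -(5/4 * ((1/4:ℝ) ^ (j - 1) + (1/4:ℝ) ^ (n - j - 1))) =
              -(5/4 * ((∑ j ∈ Finset.Ico 2 (n - 1), (1/4:ℝ) ^ (j - 1)) +
                ∑ j ∈ Finset.Ico 2 (n - 1), (1/4:ℝ) ^ (n - j - 1))) := by
            rw [Finset.sum_neg_distrib, ← Finset.mul_sum, Finset.sum_add_distrib]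
          rw [hsum2] at hsum
          nlinarith
        have hg1' : (0:ℝ) ≤ xiz 1 * xiz (n - 1) - 1 :=
          eps_nonneg (le_refl 1) (show 1 < n by omega)
        have hgn' : (0:ℝ) ≤ xiz (n - 1) * xiz (n - (n - 1)) - 1 :=
          eps_nonneg (by omega) (by omega)
        rw [hbot, htop, show ((-1:ℝ)) ^ (1 + 1) = 1 by norm_num,
          show ((-1:ℝ)) ^ (n - 1 + 1) = 1 by
            rw [show n - 1 + 1 = n by omega]; exact hEven.neg_one_pow,
          one_mul, one_mul]
        linarith
    have hW6 : (1/6 : ℝ) ≤ W := by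
      rw [hWsplit, hsigns]
      linarith
    have hP : (0:ℝ) < 4 / (2 * Real.pi) ^ (2 * n) := by positivity
    have hmw : 4 / (2 * Real.pi) ^ (2 * n) * (1/6) ≤ 4 / (2 * Real.pi) ^ (2 * n) * W :=
      mul_le_mul_of_nonneg_left hW6 hP.le
    have hmw0 : (0:ℝ) < 4 / (2 * Real.pi) ^ (2 * n) * (1/6) := by positivity
    rw [hsplit, hmid]
    linarith
  intro hzero
  rw [hzero] at hcast
  simp only [Rat.cast_zero] at hcast
  rw [← hcast] at hkey
  exact lt_irrefl 0 hkey
end
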